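/- arXiv:1805.10112 — 2 statements merged into one kernel-verified Lean document; each statement's English description precedes it below -/
import Mathlib

section
/- Let G = (V,E) be a finite connected simple graph with at least one edge. Then G is homogeneous (i.e., there exists a pmf μ on Γ_G whose edge usage probability η_μ is constant on E) if and only if every feasible partition P of G satisfies |E_P|/(k_P − 1) ≥ |E|/(|V| − 1). -/
noncomputable section
open scoped Classical
open Finset

variable {V : Type*} [Fintype V] [DecidableEq V]

/-- A pmf on a finite family `Γ` of edge sets. -/
def IsPmf (Γ : Finset (Finset (Sym2 V))) (μ : Finset (Sym2 V) → ℝ) : Prop :=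
  (∀ γ, 0 ≤ μ γ) ∧ (∀ γ, γ ∉ Γ → μ γ = 0) ∧ ∑ γ ∈ Γ, μ γ = 1

/-- Edge usage probability. -/
def eta (Γ : Finset (Finset (Sym2 V))) (μ : Finset (Sym2 V) → ℝ) (e : Sym2 V) : ℝ :=
  ∑ γ ∈ Γ.filter (fun γ => e ∈ γ), μ γ

/-- Expected overlap. -/
def EO (Γ : Finset (Finset (Sym2 V))) (μ : Finset (Sym2 V) → ℝ) : ℝ :=
  ∑ γ ∈ Γ, ∑ γ' ∈ Γ, ((γ ∩ γ').card : ℝ) * μ γ * μ γ'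

/-- Minimum expected overlap. -/
def MEO (Γ : Finset (Finset (Sym2 V))) : ℝ :=
  sInf {x : ℝ | ∃ μ, IsPmf Γ μ ∧ x = EO Γ μ}

/-- The set of spanning trees of `G`, as finsets of edges. -/
def spanningTrees (G : SimpleGraph V) : Finset (Finset (Sym2 V)) :=
  Finset.univ.filter (fun γ => ↑γ ⊆ G.edgeSet ∧
    (SimpleGraph.fromEdgeSet (↑γ : Set (Sym2 V))).Connected ∧
    γ.card = Fintype.card V - 1)

/-- Edges of `G` with both endpoints in `W`. -/
def edgesWithin (G : SimpleGraph V) (W : Finset V) : Finset (Sym2 V) :=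
  G.edgeFinset.filter (fun e => ∀ v ∈ e, v ∈ W)

/-- `γ` is a spanning tree of the subgraph of `G` induced by the vertex set `W`. -/
def IsSpanningTreeOn (G : SimpleGraph V) (W : Finset V) (γ : Finset (Sym2 V)) : Prop :=
  γ ⊆ edgesWithin G W ∧
    ((SimpleGraph.fromEdgeSet (↑γ : Set (Sym2 V))).induce (↑W : Set V)).Connected ∧
    γ.card = W.card - 1

def spanningTreesOn (G : SimpleGraph V) (W : Finset V) : Finset (Finset (Sym2 V)) :=
  Finset.univ.filter (IsSpanningTreeOn G W)

def Adm (Γ : Finset (Finset (Sym2 V))) (ρ : Sym2 V → ℝ) : Prop :=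
  (∀ e, 0 ≤ ρ e) ∧ ∀ γ ∈ Γ, 1 ≤ ∑ e ∈ γ, ρ e

def Mod2 (Eset : Finset (Sym2 V)) (Γ : Finset (Finset (Sym2 V))) : ℝ :=
  sInf {x : ℝ | ∃ ρ, Adm Γ ρ ∧ x = ∑ e ∈ Eset, (ρ e) ^ 2}

/-- A fair spanning tree. -/
def IsFair (G : SimpleGraph V) (γ : Finset (Sym2 V)) : Prop :=
  ∃ μ, IsPmf (spanningTrees G) μ ∧ EO (spanningTrees G) μ = MEO (spanningTrees G) ∧ 0 < μ γ

def IsFeasiblePartition (G : SimpleGraph V) (P : Finset (Finset V)) : Prop :=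
  2 ≤ P.card ∧ (∀ p ∈ P, p.Nonempty) ∧ (∀ v : V, ∃! p, p ∈ P ∧ v ∈ p) ∧
    ∀ p ∈ P, (G.induce (↑p : Set V)).Connected

/-- The edges of `G` joining distinct parts of the partition `P`. -/
def cutEdges (G : SimpleGraph V) (P : Finset (Finset V)) : Finset (Sym2 V) :=
  G.edgeFinset.filter (fun e => ¬ ∃ p ∈ P, ∀ v ∈ e, v ∈ p)

/-- `G` is homogeneous. -/
def IsHomogeneous (G : SimpleGraph V) : Prop :=
  ∃ μ, IsPmf (spanningTrees G) μ ∧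
    ∃ c : ℝ, ∀ e ∈ G.edgeFinset, eta (spanningTrees G) μ e = c


set_option linter.unusedSectionVars false

def GF (A : Finset (Sym2 V)) : SimpleGraph V := SimpleGraph.fromEdgeSet (↑A : Set (Sym2 V))

instance (A : Finset (Sym2 V)) : Finite (GF A).ConnectedComponent :=
  Quot.finite _

def ncomp (A : Finset (Sym2 V)) : ℕ := Nat.card (GF A).ConnectedComponent

lemma GF_adj {A : Finset (Sym2 V)} {x y : V} : (GF A).Adj x y ↔ s(x,y) ∈ A ∧ x ≠ y := by
  simp [GF, SimpleGraph.fromEdgeSet_adj]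

lemma GF_mono {A B : Finset (Sym2 V)} (h : A ⊆ B) : GF A ≤ GF B :=
  SimpleGraph.fromEdgeSet_mono (by exact_mod_cast h)

/-- Reachability after inserting an edge. -/
lemma reach_insert_iff {A : Finset (Sym2 V)} {u v : V} (huv : u ≠ v) (x y : V) :
    (GF (insert s(u,v) A)).Reachable x y ↔
      (GF A).Reachable x y ∨
      ((GF A).Reachable x u ∧ (GF A).Reachable v y) ∨
      ((GF A).Reachable x v ∧ (GF A).Reachable u y) := by
  constructor
  · rintro ⟨p⟩
    induction p with
    | nil => exact Or.inl (SimpleGraph.Reachable.refl _)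
    | @cons a b c h p ih =>
      have hab : s(a,b) = s(u,v) ∨ (GF A).Adj a b := by
        rcases GF_adj.mp h with ⟨hm, hne⟩
        rcases Finset.mem_insert.mp hm with h1 | h1
        · exact Or.inl h1
        · exact Or.inr (GF_adj.mpr ⟨h1, hne⟩)
      have hR : (GF A).Reachable a b ∨ (a = u ∧ b = v) ∨ (a = v ∧ b = u) := by
        rcases hab with h1 | h1
        · rw [Sym2.eq_iff] at h1; tauto
        · exact Or.inl h1.reachable
      -- combine hR with ih
      rcases hR with hr | ⟨rfl, rfl⟩ | ⟨rfl, rfl⟩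
      · rcases ih with ih | ⟨h1, h2⟩ | ⟨h1, h2⟩
        · exact Or.inl (hr.trans ih)
        · exact Or.inr (Or.inl ⟨hr.trans h1, h2⟩)
        · exact Or.inr (Or.inr ⟨hr.trans h1, h2⟩)
      · rcases ih with ih | ⟨h1, h2⟩ | ⟨h1, h2⟩
        · exact Or.inr (Or.inl ⟨SimpleGraph.Reachable.refl _, ih⟩)
        · exact Or.inl (h1.symm.trans h2)
        · exact Or.inl h2
      · rcases ih with ih | ⟨h1, h2⟩ | ⟨h1, h2⟩
        · exact Or.inr (Or.inr ⟨SimpleGraph.Reachable.refl _, ih⟩)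
        · exact Or.inl h2
        · exact Or.inl (h1.symm.trans h2)
  · have hmono : ∀ {a b : V}, (GF A).Reachable a b → (GF (insert s(u,v) A)).Reachable a b :=
      fun h => h.mono (GF_mono (Finset.subset_insert _ _))
    have huv' : (GF (insert s(u,v) A)).Reachable u v :=
      (GF_adj.mpr ⟨Finset.mem_insert_self _ _, huv⟩).reachable
    rintro (h | ⟨h1, h2⟩ | ⟨h1, h2⟩)
    · exact hmono h
    · exact ((hmono h1).trans huv').trans (hmono h2)
    · exact ((hmono h1).trans huv'.symm).trans (hmono h2)


lemma ncomp_congr {A B : Finset (Sym2 V)}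
    (h : ∀ x y, (GF A).Reachable x y ↔ (GF B).Reachable x y) : ncomp A = ncomp B :=
  Nat.card_congr (Quot.congrRight h)

/-- Inserting an edge whose endpoints are already connected. -/
lemma reach_insert_of_reach {A : Finset (Sym2 V)} {u v : V} (huv : u ≠ v)
    (h : (GF A).Reachable u v) (x y : V) :
    (GF (insert s(u,v) A)).Reachable x y ↔ (GF A).Reachable x y := by
  rw [reach_insert_iff huv]
  constructor
  · rintro (h1 | ⟨h1, h2⟩ | ⟨h1, h2⟩)
    · exact h1
    · exact (h1.trans h).trans h2
    · exact (h1.trans h.symm).trans h2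
  · exact Or.inl

lemma ncomp_insert_of_reach {A : Finset (Sym2 V)} {u v : V} (huv : u ≠ v)
    (h : (GF A).Reachable u v) : ncomp (insert s(u,v) A) = ncomp A :=
  ncomp_congr (reach_insert_of_reach huv h)

lemma ncomp_pos (A : Finset (Sym2 V)) [Nonempty V] : 0 < ncomp A := by
  haveI : Nonempty (GF A).ConnectedComponent :=
    ⟨(GF A).connectedComponentMk (Classical.arbitrary V)⟩
  exact Nat.card_pos

/-- Inserting an edge joining two distinct components. -/
lemma ncomp_insert_of_not_reach {A : Finset (Sym2 V)} {u v : V} (huv : u ≠ v)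
    (h : ¬ (GF A).Reachable u v) : ncomp A = ncomp (insert s(u,v) A) + 1 := by
  classical
  set H := GF A
  set H' := GF (insert s(u,v) A)
  haveI : Fintype H.ConnectedComponent := Fintype.ofFinite _
  haveI : Fintype H'.ConnectedComponent := Fintype.ofFinite _
  have hle : H ≤ H' := GF_mono (Finset.subset_insert _ _)
  set φ : H.ConnectedComponent → H'.ConnectedComponent :=
    SimpleGraph.ConnectedComponent.map (SimpleGraph.Hom.ofLE hle) with hφ
  have hφmk : ∀ x : V, φ (H.connectedComponentMk x) = H'.connectedComponentMk x := fun x => rfl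
  have key : ∀ x y : V, H'.Reachable x y ↔
      (H.Reachable x y ∨ (H.Reachable x u ∧ H.Reachable v y) ∨
        (H.Reachable x v ∧ H.Reachable u y)) := fun x y => reach_insert_iff huv x y
  have hcard := Finset.card_eq_sum_card_fiberwise
    (f := φ) (s := Finset.univ) (t := Finset.univ) (fun x _ => Finset.mem_univ _)
  rw [Finset.card_univ] at hcard
  -- fiber of the component of u is {mk u, mk v}
  have fib_u : Finset.univ.filter (fun D => φ D = H'.connectedComponentMk u)
      = {H.connectedComponentMk u, H.connectedComponentMk v} := by
    ext D
    induction D using SimpleGraph.ConnectedComponent.ind with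
    | _ x =>
      simp only [Finset.mem_filter, Finset.mem_univ, true_and, Finset.mem_insert,
        Finset.mem_singleton, hφmk, SimpleGraph.ConnectedComponent.eq]
      rw [key x u]
      constructor
      · rintro (h1 | ⟨h1, h2⟩ | ⟨h1, h2⟩)
        · exact Or.inl h1
        · exact Or.inl h1
        · exact Or.inr h1
      · rintro (h1 | h1)
        · exact Or.inl h1
        · exact Or.inr (Or.inr ⟨h1, SimpleGraph.Reachable.refl _⟩)
  have fib_other : ∀ C : H'.ConnectedComponent, C ≠ H'.connectedComponentMk u →
      (Finset.univ.filter (fun D => φ D = C)).card = 1 := by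
    intro C hC
    induction C using SimpleGraph.ConnectedComponent.ind with
    | _ z =>
      rw [Finset.card_eq_one]
      refine ⟨H.connectedComponentMk z, ?_⟩
      ext D
      induction D using SimpleGraph.ConnectedComponent.ind with
      | _ x =>
        simp only [Finset.mem_filter, Finset.mem_univ, true_and, Finset.mem_singleton, hφmk,
          SimpleGraph.ConnectedComponent.eq]
        rw [key x z]
        constructor
        · rintro (h1 | ⟨h1, h2⟩ | ⟨h1, h2⟩)
          · exact h1
          · exact absurd (SimpleGraph.ConnectedComponent.eq.mpr ((key z u).mpr
              (Or.inr (Or.inr ⟨h2.symm, SimpleGraph.Reachable.refl _⟩)))) hC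
          · exact absurd (SimpleGraph.ConnectedComponent.eq.mpr ((key z u).mpr
              (Or.inl h2.symm))) hC
        · exact Or.inl
  have hmkuv : (H.connectedComponentMk u) ≠ H.connectedComponentMk v := by
    rw [Ne, SimpleGraph.ConnectedComponent.eq]; exact h
  have fib_u_card : (Finset.univ.filter (fun D => φ D = H'.connectedComponentMk u)).card = 2 := by
    rw [fib_u, Finset.card_insert_of_notMem (by simpa using hmkuv), Finset.card_singleton]
  have : ∑ C ∈ (Finset.univ : Finset H'.ConnectedComponent),
      (Finset.univ.filter (fun D => φ D = C)).card
      = ∑ C ∈ (Finset.univ : Finset H'.ConnectedComponent),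
        ((if C = H'.connectedComponentMk u then 2 else 1) : ℕ) := by
    refine Finset.sum_congr rfl fun C _ => ?_
    split_ifs with hif
    · rw [hif, fib_u_card]
    · exact fib_other C hif
  have hsplit : ∀ C : H'.ConnectedComponent,
      ((if C = H'.connectedComponentMk u then 2 else 1) : ℕ)
        = 1 + (if C = H'.connectedComponentMk u then 1 else 0) := by
    intro C; split_ifs <;> rfl
  rw [this] at hcard
  simp only [hsplit, Finset.sum_add_distrib, Finset.sum_const, Finset.card_univ, smul_eq_mul,
    mul_one, Finset.sum_ite_eq' Finset.univ (H'.connectedComponentMk u) (fun _ => (1:ℕ)),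
    Finset.mem_univ, if_true] at hcard
  have e1 : ncomp A = Fintype.card H.ConnectedComponent := Nat.card_eq_fintype_card
  have e2 : ncomp (insert s(u,v) A) = Fintype.card H'.ConnectedComponent := Nat.card_eq_fintype_card
  omega


lemma reach_empty {x y : V} : (GF (∅ : Finset (Sym2 V))).Reachable x y ↔ x = y := by
  constructor
  · rintro ⟨p⟩
    cases p with
    | nil => rfl
    | cons h p => rw [GF_adj] at h; simp at h
  · rintro rfl; exact SimpleGraph.Reachable.refl _

lemma ncomp_empty : ncomp (∅ : Finset (Sym2 V)) = Fintype.card V := by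
  haveI : Fintype (GF (∅ : Finset (Sym2 V))).ConnectedComponent := Fintype.ofFinite _
  rw [ncomp, Nat.card_eq_fintype_card]
  exact Fintype.card_congr
    (Equiv.symm (Equiv.ofBijective (GF (∅ : Finset (Sym2 V))).connectedComponentMk
      ⟨fun x y h => reach_empty.mp (SimpleGraph.ConnectedComponent.eq.mp h),
        fun C => C.exists_rep⟩))

lemma ncomp_insert_dichotomy {A : Finset (Sym2 V)} {e : Sym2 V} (he : ¬ e.IsDiag) :
    ncomp (insert e A) = ncomp A ∨ ncomp A = ncomp (insert e A) + 1 := by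
  induction e with
  | _ u v =>
    have huv : u ≠ v := by simpa using he
    by_cases h : (GF A).Reachable u v
    · exact Or.inl (ncomp_insert_of_reach huv h)
    · exact Or.inr (ncomp_insert_of_not_reach huv h)

lemma ncomp_union_le (A B : Finset (Sym2 V)) (hB : ∀ e ∈ B, ¬ e.IsDiag) :
    ncomp A ≤ ncomp (A ∪ B) + B.card := by
  induction B using Finset.induction_on generalizing A with
  | empty => simp
  | @insert e B heB ih =>
    have h2 : ncomp A ≤ ncomp (insert e A) + 1 := by
      rcases ncomp_insert_dichotomy (A := A) (hB e (Finset.mem_insert_self _ _)) with h | h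
      · omega
      · omega
    have h3 := ih (A := insert e A) (fun f hf => hB f (Finset.mem_insert_of_mem hf))
    rw [Finset.insert_union] at h3
    rw [← Finset.union_insert] at h3
    rw [Finset.card_insert_of_notMem heB]
    omega

lemma ncomp_eq_one_of_connected {A : Finset (Sym2 V)} (h : (GF A).Connected) : ncomp A = 1 := by
  obtain ⟨v⟩ := h.nonempty
  rw [ncomp, Nat.card_eq_one_iff_unique]
  refine ⟨⟨fun C D => ?_⟩, ⟨(GF A).connectedComponentMk v⟩⟩
  induction C using SimpleGraph.ConnectedComponent.ind with
  | _ x =>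
    induction D using SimpleGraph.ConnectedComponent.ind with
    | _ y => exact SimpleGraph.ConnectedComponent.eq.mpr (h.preconnected x y)

lemma reach_of_ncomp_eq_one {A : Finset (Sym2 V)} (h : ncomp A = 1) (x y : V) :
    (GF A).Reachable x y := by
  rw [ncomp, Nat.card_eq_one_iff_unique] at h
  exact SimpleGraph.ConnectedComponent.eq.mp (h.1.1 _ _)

/-- The reachability class of `v` as a finset. -/
def part (A : Finset (Sym2 V)) (v : V) : Finset V :=
  Finset.univ.filter (fun w => (GF A).Reachable v w)

lemma mem_part {A : Finset (Sym2 V)} {v w : V} : w ∈ part A v ↔ (GF A).Reachable v w := by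
  simp [part]

lemma part_eq_of_reach {A : Finset (Sym2 V)} {v w : V} (h : (GF A).Reachable v w) :
    part A v = part A w := by
  ext z; simp only [mem_part]
  exact ⟨fun h1 => h.symm.trans h1, fun h1 => h.trans h1⟩

def partsOf (A : Finset (Sym2 V)) : Finset (Finset V) :=
  Finset.univ.image (part A)

lemma partsOf_card (A : Finset (Sym2 V)) : (partsOf A).card = ncomp A := by
  haveI : Fintype (GF A).ConnectedComponent := Fintype.ofFinite _
  have hwd : ∀ (v w : V) (p : (GF A).Walk v w), p.IsPath → part A v = part A w :=
    fun v w p _ => part_eq_of_reach ⟨p⟩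
  set f : (GF A).ConnectedComponent → Finset V := SimpleGraph.ConnectedComponent.lift _ hwd
    with hf
  have hfmk : ∀ v : V, f ((GF A).connectedComponentMk v) = part A v := fun v => rfl
  have himg : partsOf A = Finset.univ.image f := by
    ext p
    simp only [partsOf, Finset.mem_image, Finset.mem_univ, true_and]
    constructor
    · rintro ⟨v, rfl⟩; exact ⟨(GF A).connectedComponentMk v, hfmk v⟩
    · rintro ⟨C, rfl⟩
      induction C using SimpleGraph.ConnectedComponent.ind with
      | _ v => exact ⟨v, (hfmk v).symm⟩
  have hinj : Function.Injective f := by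
    intro C D h
    induction C using SimpleGraph.ConnectedComponent.ind with
    | _ x =>
      induction D using SimpleGraph.ConnectedComponent.ind with
      | _ y =>
        rw [hfmk, hfmk] at h
        refine SimpleGraph.ConnectedComponent.eq.mpr ?_
        have : y ∈ part A x := h ▸ mem_part.mpr (SimpleGraph.Reachable.refl _)
        exact mem_part.mp this
  rw [himg, Finset.card_image_of_injective _ hinj, Finset.card_univ, ncomp,
    Nat.card_eq_fintype_card]

lemma GF_le {A : Finset (Sym2 V)} {G : SimpleGraph V} (hA : A ⊆ G.edgeFinset) : GF A ≤ G := by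
  have : (↑A : Set (Sym2 V)) ⊆ G.edgeSet := by
    intro e he
    exact SimpleGraph.mem_edgeFinset.mp (hA he)
  calc GF A ≤ SimpleGraph.fromEdgeSet G.edgeSet := SimpleGraph.fromEdgeSet_mono this
  _ = G := SimpleGraph.fromEdgeSet_edgeSet G

lemma induce_reach_of_walk {G : SimpleGraph V} {A : Finset (Sym2 V)} (hA : A ⊆ G.edgeFinset)
    (S : Finset V) (hS : ∀ a b, a ∈ S → (GF A).Adj a b → b ∈ S) :
    ∀ {x y : V} (_ : (GF A).Walk x y) (hx : x ∈ S) (hy : y ∈ S),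
      (G.induce (↑S : Set V)).Reachable ⟨x, hx⟩ ⟨y, hy⟩ := by
  intro x y p
  induction p with
  | nil => intro hx hy; exact SimpleGraph.Reachable.refl _
  | @cons a b c h p ih =>
    intro hx hy
    have hb : b ∈ S := hS _ _ hx h
    have step : (G.induce (↑S : Set V)).Adj ⟨a, hx⟩ ⟨b, hb⟩ := by
      simp only [SimpleGraph.comap_adj, Function.Embedding.coe_subtype]
      exact GF_le hA h
    exact step.reachable.trans (ih hb hy)

/-- Each reachability class induces a connected subgraph of `G`. -/
lemma part_induce_connected {A : Finset (Sym2 V)} {G : SimpleGraph V}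
    (hA : A ⊆ G.edgeFinset) (v : V) : (G.induce (↑(part A v) : Set V)).Connected := by
  rw [SimpleGraph.connected_iff]
  constructor
  · rintro ⟨x, hx⟩ ⟨y, hy⟩
    have hx' := mem_part.mp (Finset.mem_coe.mp hx)
    have hy' := mem_part.mp (Finset.mem_coe.mp hy)
    obtain ⟨p⟩ := hx'.symm.trans hy'
    exact induce_reach_of_walk hA (part A v)
      (fun a b ha hab => mem_part.mpr ((mem_part.mp ha).trans hab.reachable)) p hx hy
  · exact ⟨⟨v, Finset.mem_coe.mpr (mem_part.mpr (SimpleGraph.Reachable.refl _))⟩⟩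

lemma reach_closed {A : Finset (Sym2 V)} {S : Set V}
    (hS : ∀ a b, a ∈ S → (GF A).Adj a b → b ∈ S) {x y : V}
    (h : (GF A).Reachable x y) (hx : x ∈ S) : y ∈ S := by
  obtain ⟨p⟩ := h
  induction p with
  | nil => exact hx
  | @cons a b c h p ih => exact ih (hS _ _ hx h)

lemma partsOf_feasible {A : Finset (Sym2 V)} {G : SimpleGraph V}
    (hA : A ⊆ G.edgeFinset) (h2 : 2 ≤ ncomp A) : IsFeasiblePartition G (partsOf A) := by
  refine ⟨by rw [partsOf_card]; exact h2, ?_, ?_, ?_⟩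
  · rintro p hp
    obtain ⟨v, _, rfl⟩ := Finset.mem_image.mp hp
    exact ⟨v, mem_part.mpr (SimpleGraph.Reachable.refl _)⟩
  · intro v
    refine ⟨part A v, ⟨Finset.mem_image.mpr ⟨v, Finset.mem_univ _, rfl⟩,
      mem_part.mpr (SimpleGraph.Reachable.refl _)⟩, ?_⟩
    rintro q ⟨hq, hvq⟩
    obtain ⟨u, _, rfl⟩ := Finset.mem_image.mp hq
    exact part_eq_of_reach (mem_part.mp hvq)
  · rintro p hp
    obtain ⟨v, _, rfl⟩ := Finset.mem_image.mp hp
    exact part_induce_connected hA v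

lemma cutEdges_partsOf_subset {A : Finset (Sym2 V)} {G : SimpleGraph V}
    (hA : A ⊆ G.edgeFinset) : cutEdges G (partsOf A) ⊆ G.edgeFinset \ A := by
  intro e he
  rw [cutEdges, Finset.mem_filter] at he
  rw [Finset.mem_sdiff]
  refine ⟨he.1, fun heA => he.2 ?_⟩
  induction e with
  | _ a b =>
    have hne : a ≠ b := by
      intro h
      exact (SimpleGraph.not_isDiag_of_mem_edgeSet G (SimpleGraph.mem_edgeFinset.mp he.1))
        (by simp [h])
    refine ⟨part A a, Finset.mem_image.mpr ⟨a, Finset.mem_univ _, rfl⟩, ?_⟩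
    intro v hv
    rcases Sym2.mem_iff.mp hv with rfl | rfl
    · exact mem_part.mpr (SimpleGraph.Reachable.refl _)
    · exact mem_part.mpr (GF_adj.mpr ⟨heA, hne⟩).reachable

lemma mem_spanningTrees_iff {G : SimpleGraph V} {γ : Finset (Sym2 V)} :
    γ ∈ spanningTrees G ↔ (↑γ : Set (Sym2 V)) ⊆ G.edgeSet ∧ (GF γ).Connected ∧
      γ.card = Fintype.card V - 1 := by
  rw [spanningTrees, Finset.mem_filter]
  simp only [Finset.mem_univ, true_and]
  rfl

lemma tree_cut_lower {G : SimpleGraph V} {γ : Finset (Sym2 V)} (hγ : γ ∈ spanningTrees G)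
    {P : Finset (Finset V)} (hP : IsFeasiblePartition G P) :
    P.card ≤ (γ ∩ cutEdges G P).card + 1 := by
  obtain ⟨hγE, hconn, hcard⟩ := mem_spanningTrees_iff.mp hγ
  obtain ⟨hk, hne, huniq, _⟩ := hP
  set B := γ ∩ cutEdges G P with hB
  set Aw := γ \ cutEdges G P with hAw
  have hdiag : ∀ e ∈ γ, ¬ e.IsDiag := fun e he =>
    SimpleGraph.not_isDiag_of_mem_edgeSet G (hγE he)
  -- reachability in Aw stays within parts
  have hstay : ∀ (p : Finset V), p ∈ P → ∀ a b, a ∈ (↑p : Set V) → (GF Aw).Adj a b →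
      b ∈ (↑p : Set V) := by
    intro p hp a b ha hab
    obtain ⟨habA, hne'⟩ := GF_adj.mp hab
    rw [hAw, Finset.mem_sdiff] at habA
    obtain ⟨hγab, hncut⟩ := habA
    rw [cutEdges, Finset.mem_filter, not_and, not_not] at hncut
    obtain ⟨q, hq, hvq⟩ := hncut (SimpleGraph.mem_edgeFinset.mpr (hγE hγab))
    have haq : a ∈ q := hvq a (Sym2.mem_mk_left a b)
    have hbq : b ∈ q := hvq b (Sym2.mem_mk_right a b)
    obtain ⟨_, _, hu⟩ := huniq a
    have : q = p := (hu q ⟨hq, haq⟩).trans (hu p ⟨hp, ha⟩).symm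
    exact this ▸ hbq
  -- number of parts is at most ncomp Aw
  haveI : Fintype (GF Aw).ConnectedComponent := Fintype.ofFinite _
  haveI : Nonempty V := by
    have : P.Nonempty := Finset.card_pos.mp (by omega)
    obtain ⟨p, hp⟩ := this
    obtain ⟨v, _⟩ := hne p hp
    exact ⟨v⟩
  have hinj : P.card ≤ ncomp Aw := by
    have hrep : ∀ p ∈ P, ∃ v, v ∈ p := fun p hp => hne p hp
    choose rep hrep using hrep
    have := Finset.card_le_card_of_injOn
      (f := fun p => if hp : p ∈ P then (GF Aw).connectedComponentMk (rep p hp) else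
        (GF Aw).connectedComponentMk (Classical.arbitrary _)) (s := P)
      (t := Finset.univ) (fun p _ => Finset.mem_univ _) ?_
    · rwa [Finset.card_univ, ← Nat.card_eq_fintype_card] at this
    · intro p hp q hq hpq
      simp only [Finset.mem_coe] at hp hq
      dsimp only at hpq
      rw [dif_pos hp, dif_pos hq, SimpleGraph.ConnectedComponent.eq] at hpq
      have hmem : rep q hq ∈ (↑p : Set V) := reach_closed (S := (↑p : Set V)) (hstay p hp) hpq
        (Finset.mem_coe.mpr (hrep p hp))
      obtain ⟨_, _, hu⟩ := huniq (rep q hq)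
      exact (hu p ⟨hp, Finset.mem_coe.mp hmem⟩).trans (hu q ⟨hq, hrep q hq⟩).symm
  have hunion : Aw ∪ B = γ := Finset.sdiff_union_inter γ (cutEdges G P)
  have hle := ncomp_union_le Aw B (fun e he => hdiag e (Finset.mem_of_mem_inter_left he))
  rw [hunion, ncomp_eq_one_of_connected hconn] at hle
  omega

lemma sum_eta (Γ : Finset (Finset (Sym2 V))) (μ : Finset (Sym2 V) → ℝ) (S : Finset (Sym2 V)) :
    ∑ e ∈ S, eta Γ μ e = ∑ γ ∈ Γ, μ γ * ((γ ∩ S).card : ℝ) := by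
  unfold eta
  simp_rw [Finset.sum_filter]
  rw [Finset.sum_comm]
  refine Finset.sum_congr rfl fun γ _ => ?_
  rw [← Finset.sum_filter, Finset.sum_const, Finset.filter_mem_eq_inter, Finset.inter_comm,
    nsmul_eq_mul, mul_comm]

lemma card_V_pos {G : SimpleGraph V} (hE : G.edgeFinset.Nonempty) : 2 ≤ Fintype.card V := by
  obtain ⟨e, he⟩ := hE
  rw [SimpleGraph.mem_edgeFinset] at he
  induction e with
  | _ a b =>
    have : a ≠ b := G.ne_of_adj (G.mem_edgeSet.mp he)
    exact Fintype.one_lt_card_iff.mpr ⟨a, b, this⟩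

lemma forward_dir {G : SimpleGraph V} (hG : G.Connected) (hE : G.edgeFinset.Nonempty)
    (h : IsHomogeneous G) :
    ∀ P : Finset (Finset V), IsFeasiblePartition G P →
      (G.edgeFinset.card : ℝ) / ((Fintype.card V : ℝ) - 1) ≤
        ((cutEdges G P).card : ℝ) / ((P.card : ℝ) - 1) := by
  obtain ⟨μ, ⟨hpos, hzero, hsum⟩, c, hc⟩ := h
  intro P hP
  set n := Fintype.card V with hn
  set m := G.edgeFinset.card with hm
  set k := P.card with hk
  have hn2 : 2 ≤ n := card_V_pos hE
  have hm1 : 1 ≤ m := Finset.card_pos.mpr hE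
  have hk2 : 2 ≤ k := hP.1
  -- total usage
  have hsub : ∀ γ ∈ spanningTrees G, γ ∩ G.edgeFinset = γ := by
    intro γ hγ
    obtain ⟨h1, _, _⟩ := mem_spanningTrees_iff.mp hγ
    exact Finset.inter_eq_left.mpr fun e he => SimpleGraph.mem_edgeFinset.mpr (h1 he)
  have htotal : (m : ℝ) * c = ((n - 1 : ℕ) : ℝ) := by
    have h1 : ∑ e ∈ G.edgeFinset, eta (spanningTrees G) μ e = (m : ℝ) * c := by
      rw [Finset.sum_congr rfl (fun e he => hc e he), Finset.sum_const, nsmul_eq_mul]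
    have h2 : ∑ e ∈ G.edgeFinset, eta (spanningTrees G) μ e = ((n - 1 : ℕ) : ℝ) := by
      rw [sum_eta]
      have : ∀ γ ∈ spanningTrees G, μ γ * ((γ ∩ G.edgeFinset).card : ℝ)
          = ((n - 1 : ℕ) : ℝ) * μ γ := by
        intro γ hγ
        rw [hsub γ hγ, (mem_spanningTrees_iff.mp hγ).2.2, mul_comm]
      rw [Finset.sum_congr rfl this, ← Finset.mul_sum, hsum, mul_one]
    rw [← h1, h2]
  -- cut usage
  have hcut : ((k - 1 : ℕ) : ℝ) ≤ ((cutEdges G P).card : ℝ) * c := by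
    have h1 : ∑ e ∈ cutEdges G P, eta (spanningTrees G) μ e
        = ((cutEdges G P).card : ℝ) * c := by
      have hsubcut : cutEdges G P ⊆ G.edgeFinset := by
        rw [cutEdges]; exact Finset.filter_subset _ _
      rw [Finset.sum_congr rfl (fun e he => hc e (hsubcut he)),
        Finset.sum_const, nsmul_eq_mul]
    rw [← h1, sum_eta]
    calc ((k - 1 : ℕ) : ℝ) = ∑ γ ∈ spanningTrees G, μ γ * ((k - 1 : ℕ) : ℝ) := by
          rw [← Finset.sum_mul, hsum, one_mul]
    _ ≤ ∑ γ ∈ spanningTrees G, μ γ * ((γ ∩ cutEdges G P).card : ℝ) := by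
          refine Finset.sum_le_sum fun γ hγ => ?_
          refine mul_le_mul_of_nonneg_left ?_ (hpos γ)
          have := tree_cut_lower hγ hP
          exact_mod_cast Nat.cast_le.mpr (by omega : k - 1 ≤ (γ ∩ cutEdges G P).card)
  -- algebra
  have hn1 : (0:ℝ) < (n : ℝ) - 1 := by
    have : (2:ℝ) ≤ (n : ℝ) := by exact_mod_cast hn2
    linarith
  have hk1 : (0:ℝ) < (k : ℝ) - 1 := by
    have : (2:ℝ) ≤ (k : ℝ) := by exact_mod_cast hk2
    linarith
  have hm0 : (0:ℝ) < (m : ℝ) := by exact_mod_cast hm1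
  have hcast1 : ((n - 1 : ℕ) : ℝ) = (n : ℝ) - 1 := by
    rw [Nat.cast_sub (by omega)]; norm_num
  have hcast2 : ((k - 1 : ℕ) : ℝ) = (k : ℝ) - 1 := by
    rw [Nat.cast_sub (by omega)]; norm_num
  rw [div_le_div_iff₀ hn1 hk1]
  rw [hcast1] at htotal
  rw [hcast2] at hcut
  have hc0 : 0 ≤ c := by nlinarith
  nlinarith [mul_le_mul_of_nonneg_left hcut hm0.le]

/-- One step of Kruskal's algorithm. -/
def kstep (γ : Finset (Sym2 V)) (e : Sym2 V) : Finset (Sym2 V) :=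
  if ncomp (insert e γ) < ncomp γ then insert e γ else γ

def krus : Finset (Sym2 V) → List (Sym2 V) → Finset (Sym2 V)
  | γ, [] => γ
  | γ, e :: L => krus (kstep γ e) L

lemma krus_append (γ : Finset (Sym2 V)) (M : List (Sym2 V)) (e : Sym2 V) :
    krus γ (M ++ [e]) = kstep (krus γ M) e := by
  induction M generalizing γ with
  | nil => rfl
  | cons f M ih => exact ih (kstep γ f)

lemma kstep_of_reach {γ : Finset (Sym2 V)} {u v : V} (huv : u ≠ v)
    (h : (GF γ).Reachable u v) : kstep γ s(u,v) = γ := by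
  rw [kstep, if_neg]
  rw [ncomp_insert_of_reach huv h]
  omega

lemma kstep_of_not_reach {γ : Finset (Sym2 V)} {u v : V} (huv : u ≠ v)
    (h : ¬ (GF γ).Reachable u v) : kstep γ s(u,v) = insert s(u,v) γ := by
  rw [kstep, if_pos]
  rw [ncomp_insert_of_not_reach huv h]
  omega

lemma krus_subset (γ : Finset (Sym2 V)) (L : List (Sym2 V)) :
    krus γ L ⊆ γ ∪ L.toFinset := by
  induction L generalizing γ with
  | nil => simp [krus]
  | cons e L ih =>
    refine (ih (kstep γ e)).trans ?_
    have h1 : kstep γ e ⊆ insert e γ := by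
      rw [kstep]; split_ifs
      · exact Finset.Subset.refl _
      · exact Finset.subset_insert _ _
    intro x hx
    rcases Finset.mem_union.mp hx with hx | hx
    · rcases Finset.mem_insert.mp (h1 hx) with rfl | hx'
      · simp
      · exact Finset.mem_union_left _ hx'
    · simp only [List.toFinset_cons]
      exact Finset.mem_union_right _ (Finset.mem_insert_of_mem hx)

lemma krus_reach (γ : Finset (Sym2 V)) (L : List (Sym2 V)) (hL : ∀ e ∈ L, ¬ e.IsDiag) :
    ∀ x y, (GF (krus γ L)).Reachable x y ↔ (GF (γ ∪ L.toFinset)).Reachable x y := by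
  induction L generalizing γ with
  | nil => simp [krus]
  | cons e L ih =>
    intro x y
    have hed : ¬ e.IsDiag := hL e List.mem_cons_self
    have hrest : ∀ f ∈ L, ¬ f.IsDiag := fun f hf => hL f (List.mem_cons_of_mem _ hf)
    rw [show krus γ (e :: L) = krus (kstep γ e) L from rfl, ih (kstep γ e) hrest]
    have target : γ ∪ (e :: L).toFinset = insert e (γ ∪ L.toFinset) := by
      simp only [List.toFinset_cons, Finset.union_insert]
    rw [target]
    induction e with
    | _ u v =>
      have huv : u ≠ v := by simpa using hed
      by_cases h : (GF γ).Reachable u v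
      · rw [kstep_of_reach huv h]
        exact (reach_insert_of_reach huv
          ((h.mono (GF_mono Finset.subset_union_left))) x y).symm
      · rw [kstep_of_not_reach huv h, ← Finset.insert_union]

lemma krus_card (γ : Finset (Sym2 V)) (L : List (Sym2 V)) (hL : ∀ e ∈ L, ¬ e.IsDiag) :
    (krus γ L).card + ncomp (krus γ L) = γ.card + ncomp γ := by
  induction L generalizing γ with
  | nil => rfl
  | cons e L ih =>
    have hed : ¬ e.IsDiag := hL e List.mem_cons_self
    have hrest : ∀ f ∈ L, ¬ f.IsDiag := fun f hf => hL f (List.mem_cons_of_mem _ hf)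
    rw [show krus γ (e :: L) = krus (kstep γ e) L from rfl, ih (kstep γ e) hrest]
    induction e with
    | _ u v =>
      have huv : u ≠ v := by simpa using hed
      by_cases h : (GF γ).Reachable u v
      · rw [kstep_of_reach huv h]
      · rw [kstep_of_not_reach huv h]
        have hne : s(u,v) ∉ γ := fun hmem => h (GF_adj.mpr ⟨hmem, huv⟩).reachable
        rw [Finset.card_insert_of_notMem hne]
        have := ncomp_insert_of_not_reach huv h
        omega

lemma abel_bound (m : ℕ) (f : ℕ → ℝ) (hf : ∀ i, i + 1 < m → f i ≤ f (i+1))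
    (E : ℕ → ℝ) (hE0 : E 0 = 0) (hEm : E m = 0) (hEpos : ∀ i, i ≤ m → 0 ≤ E i) (t : ℝ) :
    ∑ i ∈ Finset.range m, f i * ((E (i+1) - E i) + t) ≤ t * ∑ i ∈ Finset.range m, f i := by
  have hsplit : ∑ i ∈ Finset.range m, f i * ((E (i+1) - E i) + t)
      = (∑ i ∈ Finset.range m, f i * (E (i+1) - E i)) + t * ∑ i ∈ Finset.range m, f i := by
    rw [Finset.mul_sum, ← Finset.sum_add_distrib]
    refine Finset.sum_congr rfl fun i _ => by ring
  rw [hsplit]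
  have habel : ∑ i ∈ Finset.range m, f i * (E (i+1) - E i)
      = f (m - 1) * (∑ i ∈ Finset.range m, (E (i+1) - E i))
        - ∑ i ∈ Finset.range (m - 1), (f (i+1) - f i) * ∑ j ∈ Finset.range (i+1), (E (j+1) - E j)
      := by
    have := Finset.sum_range_by_parts (f := f) (g := fun i => E (i+1) - E i) (n := m)
    simpa [smul_eq_mul] using this
  have hEtel : ∀ k : ℕ, ∑ j ∈ Finset.range k, (E (j+1) - E j) = E k - E 0 :=
    fun k => Finset.sum_range_sub E k
  have hfirst : ∑ i ∈ Finset.range m, f i * (E (i+1) - E i) ≤ 0 := by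
    rw [habel, hEtel, hEm, hE0, sub_zero, mul_zero, zero_sub, neg_nonpos]
    refine Finset.sum_nonneg fun i hi => ?_
    rw [Finset.mem_range] at hi
    rw [hEtel, hE0, sub_zero]
    have h1 : 0 ≤ f (i+1) - f i := sub_nonneg.mpr (hf i (by omega))
    have h2 : 0 ≤ E (i+1) := hEpos (i+1) (by omega)
    exact mul_nonneg h1 h2
  linarith

lemma list_sum_getD {α : Type*} (l : List α) (d : α) (w : α → ℝ) :
    ∑ i ∈ Finset.range l.length, w (l.getD i d) = (l.map w).sum := by
  induction l with
  | nil => simp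
  | cons a l ih =>
    rw [List.length_cons, Finset.sum_range_succ']
    simp only [List.getD_cons_succ, List.getD_cons_zero, List.map_cons, List.sum_cons, ih]
    ring

lemma connected_of_ncomp_eq_one [Nonempty V] {A : Finset (Sym2 V)} (h : ncomp A = 1) :
    (GF A).Connected := by
  rw [SimpleGraph.connected_iff]
  exact ⟨fun x y => reach_of_ncomp_eq_one h x y, ⟨Classical.arbitrary V⟩⟩

lemma GF_edgeFinset {G : SimpleGraph V} : GF G.edgeFinset = G := by
  rw [GF, SimpleGraph.coe_edgeFinset, SimpleGraph.fromEdgeSet_edgeSet]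

set_option maxHeartbeats 1000000 in
lemma kruskal_exists {G : SimpleGraph V} (hG : G.Connected) (hE : G.edgeFinset.Nonempty)
    (hbound : ∀ P : Finset (Finset V), IsFeasiblePartition G P →
        (G.edgeFinset.card : ℝ) / ((Fintype.card V : ℝ) - 1) ≤
          ((cutEdges G P).card : ℝ) / ((P.card : ℝ) - 1))
    (w : Sym2 V → ℝ) :
    ∃ γ ∈ spanningTrees G, ∑ e ∈ γ, w e
      ≤ (((Fintype.card V : ℝ) - 1) / (G.edgeFinset.card : ℝ)) * ∑ e ∈ G.edgeFinset, w e := by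
  haveI : Nonempty V := hG.nonempty
  set n := Fintype.card V with hn
  set m := G.edgeFinset.card with hm
  have hn2 : 2 ≤ n := card_V_pos hE
  have hm1 : 1 ≤ m := Finset.card_pos.mpr hE
  set L : List (Sym2 V) := (G.edgeFinset.toList).mergeSort (fun a b => decide (w a ≤ w b))
    with hLdef
  have hperm : L.Perm G.edgeFinset.toList := List.mergeSort_perm _ _
  have hlen : L.length = m := by rw [hperm.length_eq, Finset.length_toList]
  have hmemL : ∀ e ∈ L, e ∈ G.edgeFinset := fun e he =>
    (Finset.mem_toList).mp (hperm.mem_iff.mp he)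
  have hnodup : L.Nodup := hperm.symm.nodup (Finset.nodup_toList _)
  have hsorted : L.Pairwise (fun a b => w a ≤ w b) := by
    have := List.pairwise_mergeSort (le := fun a b => decide (w a ≤ w b))
      (fun a b c hab hbc => by
        simp only [decide_eq_true_eq] at *; exact le_trans hab hbc)
      (fun a b => by
        simp only [Bool.or_eq_true, decide_eq_true_eq]; exact le_total (w a) (w b))
      (G.edgeFinset.toList)
    exact List.Pairwise.imp (fun h => by simpa using h) this
  have hdiagL : ∀ e ∈ L, ¬ e.IsDiag := fun e he =>
    SimpleGraph.not_isDiag_of_mem_edgeSet G (SimpleGraph.mem_edgeFinset.mp (hmemL e he))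
  set v₀ : V := Classical.arbitrary V with hv₀
  set e₀ : Sym2 V := s(v₀, v₀) with he₀
  set f : ℕ → ℝ := fun i => w (L.getD i e₀) with hfd
  set A : ℕ → Finset (Sym2 V) := fun i => (L.take i).toFinset with hAd
  set γs : ℕ → Finset (Sym2 V) := fun i => krus ∅ (L.take i) with hγd
  set c : ℕ → ℕ := fun i => ncomp (A i) with hcd
  have hdiag_take : ∀ i, ∀ e ∈ L.take i, ¬ e.IsDiag :=
    fun i e he => hdiagL e (List.take_subset i L he)
  have hAsub : ∀ i, A i ⊆ G.edgeFinset := fun i e he =>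
    hmemL e (List.take_subset i L (List.mem_toFinset.mp he))
  have hAcard : ∀ i, i ≤ m → (A i).card = i := by
    intro i hi
    rw [hAd]
    rw [List.toFinset_card_of_nodup ((List.take_sublist i L).nodup hnodup),
      List.length_take, hlen]
    omega
  have hreach : ∀ i x y, (GF (γs i)).Reachable x y ↔ (GF (A i)).Reachable x y := by
    intro i x y
    have := krus_reach ∅ (L.take i) (hdiag_take i) x y
    rwa [Finset.empty_union] at this
  have hγc : ∀ i, ncomp (γs i) = c i := fun i => ncomp_congr (hreach i)
  have hγcard : ∀ i, (γs i).card + c i = n := by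
    intro i
    have := krus_card ∅ (L.take i) (hdiag_take i)
    rw [hγc i] at this
    simpa [ncomp_empty] using this
  have hc0 : c 0 = n := by
    simp only [hcd, hAd, List.take_zero, List.toFinset_nil]
    exact ncomp_empty
  have hAm : A m = G.edgeFinset := by
    rw [hAd]
    simp only
    rw [← hlen, List.take_length, List.toFinset_eq_of_perm _ _ hperm,
      Finset.toList_toFinset]
  have hcm : c m = 1 := by
    rw [hcd]
    simp only
    rw [hAm]
    exact ncomp_eq_one_of_connected (by rwa [GF_edgeFinset])
  -- step identities
  have hstepid : ∀ i, i < m → γs (i + 1) = kstep (γs i) (L.getD i e₀) ∧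
      A (i + 1) = insert (L.getD i e₀) (A i) := by
    intro i hi
    have hilen : i < L.length := by omega
    have htake : L.take (i+1) = L.take i ++ [L.getD i e₀] := by
      rw [List.getD_eq_getElem L e₀ hilen, ← List.concat_eq_append, List.take_concat_get]
    constructor
    · rw [hγd]; simp only; rw [htake, krus_append]
    · rw [hAd]; simp only
      rw [htake, List.toFinset_append]
      ext; simp [or_comm]
  -- weight telescoping
  set W : ℕ → ℝ := fun i => ∑ e ∈ γs i, w e with hWd
  have hstepW : ∀ i, i < m → W (i+1) = W i + f i * ((c i : ℝ) - (c (i+1) : ℝ)) := by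
    intro i hi
    obtain ⟨hg, hA⟩ := hstepid i hi
    have hediag : ¬ (L.getD i e₀).IsDiag :=
      hdiagL _ (by
        rw [List.getD_eq_getElem L e₀ (by omega)]
        exact List.getElem_mem _)
    revert hg hA hediag
    generalize hLi : L.getD i e₀ = e
    induction e with
    | _ u v =>
      intro hg hA hediag
      have huv : u ≠ v := by simpa using hediag
      by_cases hr : (GF (γs i)).Reachable u v
      · have hcc : c (i+1) = c i := by
          rw [hcd]; simp only; rw [hA]
          exact ncomp_insert_of_reach huv ((hreach i u v).mp hr)
        rw [hWd]; simp only
        rw [hg, kstep_of_reach huv hr, hcc]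
        ring
      · have hcc : c i = c (i+1) + 1 := by
          have h1 : ¬ (GF (A i)).Reachable u v := fun h => hr ((hreach i u v).mpr h)
          have := ncomp_insert_of_not_reach huv h1
          rw [hcd]; simp only; rw [hA]
          exact this
        have hnotmem : s(u,v) ∉ γs i := fun hmem => hr (GF_adj.mpr ⟨hmem, huv⟩).reachable
        rw [hWd]; simp only
        rw [hg, kstep_of_not_reach huv hr, Finset.sum_insert hnotmem, hfd]
        simp only [hLi]
        have : ((c i : ℝ)) - (c (i+1) : ℝ) = 1 := by
          rw [hcc]; push_cast; ring
        rw [this]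
        ring
  have hWsum : W m = ∑ i ∈ Finset.range m, f i * ((c i : ℝ) - (c (i+1) : ℝ)) := by
    have : ∀ j, j ≤ m → W j = ∑ i ∈ Finset.range j, f i * ((c i : ℝ) - (c (i+1) : ℝ)) := by
      intro j
      induction j with
      | zero => intro _; simp [hWd, hγd, krus]
      | succ j ih =>
        intro hj
        rw [Finset.sum_range_succ, ← ih (by omega), hstepW j (by omega)]
    exact this m le_rfl
  -- component-count bound from the partition hypothesis
  have hcpos : ∀ i, 1 ≤ c i := fun i => ncomp_pos (A i)
  have hcb : ∀ i, i ≤ m → ((n : ℝ) - 1) * i / m ≤ (n : ℝ) - (c i : ℝ) := by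
    intro i hi
    have hmR : (0:ℝ) < m := by exact_mod_cast hm1
    have hnR : (0:ℝ) < (n:ℝ) - 1 := by
      have : (2:ℝ) ≤ n := by exact_mod_cast hn2
      linarith
    rcases Nat.lt_or_ge (c i) 2 with hlt | hge
    · have : c i = 1 := by have := hcpos i; omega
      rw [this]
      have hiR : (i : ℝ) ≤ m := by exact_mod_cast hi
      rw [div_le_iff₀ hmR]
      push_cast
      nlinarith
    · -- use the feasible partition of components
      have hfeas := partsOf_feasible (hAsub i) hge
      have hb := hbound _ hfeas
      rw [partsOf_card] at hb
      have hcut : ((cutEdges G (partsOf (A i))).card : ℝ) ≤ (m : ℝ) - i := by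
        have h1 := Finset.card_le_card (cutEdges_partsOf_subset (hAsub i))
        rw [Finset.card_sdiff_of_subset (hAsub i), hAcard i hi] at h1
        have : ((cutEdges G (partsOf (A i))).card : ℕ) ≤ m - i := h1
        have := Nat.cast_le (α := ℝ).mpr this
        rwa [Nat.cast_sub hi] at this
      have hkR : (0:ℝ) < (c i : ℝ) - 1 := by
        have : (2:ℝ) ≤ (c i : ℝ) := by exact_mod_cast hge
        linarith
      rw [div_le_div_iff₀ hnR hkR] at hb
      -- hb : m * (c i - 1) ≤ #cut * (n - 1)
      have hcn : (c i : ℝ) ≤ n := by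
        have := hγcard i
        have : c i ≤ n := by omega
        exact_mod_cast this
      rw [div_le_iff₀ hmR]
      nlinarith
  -- Abel summation bound
  set t : ℝ := ((n : ℝ) - 1) / m with htd
  set E : ℕ → ℝ := fun i => ((n : ℝ) - (c i : ℝ)) - t * i with hEd
  have hmR : (0:ℝ) < m := by exact_mod_cast hm1
  have hE0 : E 0 = 0 := by simp [hEd, hc0]
  have hEm : E m = 0 := by
    rw [hEd]; simp only
    rw [hcm, htd]
    field_simp
    push_cast; ring
  have hEpos : ∀ i, i ≤ m → 0 ≤ E i := by
    intro i hi
    rw [hEd]; simp only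
    have := hcb i hi
    rw [htd]
    have : ((n : ℝ) - 1) * i / m = ((n:ℝ)-1)/m * i := by ring
    linarith [hcb i hi, this ▸ hcb i hi]
  have hfmono : ∀ i, i + 1 < m → f i ≤ f (i+1) := by
    intro i hi
    rw [hfd]; simp only
    have h1 : i < L.length := by omega
    have h2 : i + 1 < L.length := by omega
    rw [List.getD_eq_getElem L e₀ h1, List.getD_eq_getElem L e₀ h2]
    have := hsorted.rel_get_of_lt (a := ⟨i, h1⟩) (b := ⟨i+1, h2⟩) (by simp)
    simpa using this
  have hterm : ∀ i ∈ Finset.range m, f i * ((c i : ℝ) - (c (i+1) : ℝ))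
      = f i * ((E (i+1) - E i) + t) := by
    intro i _
    rw [hEd]; simp only
    push_cast
    ring_nf
  have habel : W m ≤ t * ∑ i ∈ Finset.range m, f i := by
    rw [hWsum, Finset.sum_congr rfl hterm]
    exact abel_bound m f hfmono E hE0 hEm hEpos t
  -- sum of weights over all edges
  have hsumall : ∑ i ∈ Finset.range m, f i = ∑ e ∈ G.edgeFinset, w e := by
    rw [hfd]
    simp only
    rw [← hlen, list_sum_getD L e₀ w, ← List.sum_toFinset w hnodup,
      List.toFinset_eq_of_perm _ _ hperm, Finset.toList_toFinset]
  -- the final tree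
  refine ⟨γs m, ?_, ?_⟩
  · rw [mem_spanningTrees_iff]
    refine ⟨?_, ?_, ?_⟩
    · intro e he
      have : e ∈ ∅ ∪ (L.take m).toFinset := krus_subset ∅ (L.take m) he
      rw [Finset.empty_union] at this
      have : e ∈ A m := this
      rw [hAm] at this
      exact SimpleGraph.mem_edgeFinset.mp this
    · have : ncomp (γs m) = 1 := by rw [hγc m, hcm]
      exact connected_of_ncomp_eq_one this
    · have := hγcard m
      rw [hcm] at this
      omega
  · calc ∑ e ∈ γs m, w e = W m := rfl
    _ ≤ t * ∑ i ∈ Finset.range m, f i := habel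
    _ = (((n : ℝ) - 1) / m) * ∑ e ∈ G.edgeFinset, w e := by rw [htd, hsumall]

/-- Indicator vector of a finset of edges. -/
def indvec (γ : Finset (Sym2 V)) : Sym2 V → ℝ := fun e => if e ∈ γ then 1 else 0

lemma indvec_inj : Function.Injective (indvec (V := V)) := by
  intro g g' h
  ext e
  have he := congrFun h e
  simp only [indvec] at he
  constructor <;> intro hmem
  · by_contra h2
    rw [if_pos hmem, if_neg h2] at he
    exact one_ne_zero he
  · by_contra h2
    rw [if_neg h2, if_pos hmem] at he
    exact one_ne_zero he.symm

lemma indicator_eq_sum_single (S : Finset (Sym2 V)) (r : ℝ) :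
    (fun e => if e ∈ S then r else 0) = ∑ e ∈ S, r • (Pi.single e (1:ℝ) : Sym2 V → ℝ) := by
  funext x
  rw [Finset.sum_apply]
  simp only [Pi.smul_apply, Pi.single_apply, smul_eq_mul, mul_ite, mul_one, mul_zero]
  rw [Finset.sum_ite_eq S x (fun _ => r)]

lemma reverse_dir {G : SimpleGraph V} (hG : G.Connected) (hE : G.edgeFinset.Nonempty)
    (hbound : ∀ P : Finset (Finset V), IsFeasiblePartition G P →
        (G.edgeFinset.card : ℝ) / ((Fintype.card V : ℝ) - 1) ≤
          ((cutEdges G P).card : ℝ) / ((P.card : ℝ) - 1)) :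
    IsHomogeneous G := by
  haveI : Nonempty V := hG.nonempty
  set n := Fintype.card V with hn
  set m := G.edgeFinset.card with hm
  set t : ℝ := ((n : ℝ) - 1) / m with htd
  set T := spanningTrees G with hT
  set x₀ : Sym2 V → ℝ := fun e => if e ∈ G.edgeFinset then t else 0 with hx₀d
  have hx₀ : x₀ ∈ convexHull ℝ ((T.image indvec : Finset (Sym2 V → ℝ)) : Set (Sym2 V → ℝ)) := by
    by_contra hcon
    obtain ⟨φ, u, hxu, hK⟩ := geometric_hahn_banach_point_closed
      (convex_convexHull ℝ _)
      ((T.image indvec).finite_toSet.isClosed_convexHull ℝ) hcon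
    set w : Sym2 V → ℝ := fun e => φ (Pi.single e 1) with hwd
    have hφS : ∀ (S : Finset (Sym2 V)) (r : ℝ),
        φ (fun e => if e ∈ S then r else 0) = r * ∑ e ∈ S, w e := by
      intro S r
      rw [indicator_eq_sum_single, map_sum, Finset.mul_sum]
      refine Finset.sum_congr rfl fun e _ => ?_
      rw [map_smul, smul_eq_mul, hwd]
    obtain ⟨γ, hγT, hγw⟩ := kruskal_exists hG hE hbound w
    have h1 : u < φ (indvec γ) := by
      refine hK _ (subset_convexHull ℝ _ ?_)
      exact Finset.mem_coe.mpr (Finset.mem_image_of_mem _ hγT)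
    have h2 : φ (indvec γ) = ∑ e ∈ γ, w e := by
      have := hφS γ 1
      rw [one_mul] at this; exact this
    have h3 : φ x₀ = t * ∑ e ∈ G.edgeFinset, w e := hφS G.edgeFinset t
    rw [h3] at hxu
    rw [h2] at h1
    linarith
  rw [Finset.convexHull_eq] at hx₀
  obtain ⟨ω, hω0, hω1, hcm⟩ := hx₀
  set μ : Finset (Sym2 V) → ℝ := fun γ => if γ ∈ T then ω (indvec γ) else 0 with hμd
  have hsum_img : ∀ g : (Sym2 V → ℝ) → ℝ,
      ∑ y ∈ T.image indvec, g y = ∑ γ ∈ T, g (indvec γ) :=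
    fun g => Finset.sum_image (fun x _ y _ h => indvec_inj h)
  have hμpos : ∀ γ, 0 ≤ μ γ := by
    intro γ
    simp only [hμd]
    split_ifs with h
    · exact hω0 _ (Finset.mem_image_of_mem _ h)
    · exact le_refl _
  have hμnotin : ∀ γ, γ ∉ T → μ γ = 0 := by
    intro γ h
    simp only [hμd]
    rw [if_neg h]
  have hμin : ∀ γ ∈ T, μ γ = ω (indvec γ) := by
    intro γ h
    simp only [hμd]
    rw [if_pos h]
  refine ⟨μ, ⟨hμpos, hμnotin, ?_⟩, t, ?_⟩
  · rw [← hω1, hsum_img]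
    exact Finset.sum_congr rfl fun γ hγ => hμin γ hγ
  · intro e he
    have hxe : x₀ e = t := by rw [hx₀d]; simp [he]
    have hcme : ((T.image indvec).centerMass ω id) e = x₀ e := by rw [hcm]
    rw [Finset.centerMass_eq_of_sum_1 _ _ hω1] at hcme
    have hval : ∑ y ∈ T.image indvec, ω y • (id y : Sym2 V → ℝ) = fun e =>
        ∑ y ∈ T.image indvec, ω y * y e := by
      funext x
      rw [Finset.sum_apply]
      rfl
    rw [hval] at hcme
    rw [eta, Finset.sum_filter]
    have : ∑ γ ∈ T, (if e ∈ γ then μ γ else 0) = ∑ γ ∈ T, μ γ * indvec γ e := by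
      refine Finset.sum_congr rfl fun γ _ => ?_
      rw [indvec]
      split_ifs <;> simp
    rw [this]
    have h2 : ∑ γ ∈ T, μ γ * indvec γ e = ∑ y ∈ T.image indvec, ω y * y e := by
      rw [hsum_img (fun y => ω y * y e)]
      exact Finset.sum_congr rfl fun γ hγ => by rw [hμin γ hγ]
    rw [h2]
    dsimp only at hcme
    rw [hcme, hxe]

/-- `G` is homogeneous iff every feasible partition `P` satisfies
`|E_P|/(k_P - 1) ≥ |E|/(|V| - 1)`. -/
theorem homogeneous_iff_feasible_partition_bound
    {V : Type*} [Fintype V] [DecidableEq V]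
    (G : SimpleGraph V) (hG : G.Connected) (hE : G.edgeFinset.Nonempty) :
    IsHomogeneous G ↔
      ∀ P : Finset (Finset V), IsFeasiblePartition G P →
        (G.edgeFinset.card : ℝ) / ((Fintype.card V : ℝ) - 1) ≤
          ((cutEdges G P).card : ℝ) / ((P.card : ℝ) - 1) :=
  ⟨fun h => forward_dir hG hE h, fun h => reverse_dir hG hE h⟩
end
end

section
/- Let G = (V,E) be a finite connected simple graph, let V_H ⊆ V be such that the induced subgraph H = G[V_H] is connected, and write E_H for the edge set of H. If γ ∈ Γ_G is a spanning tree of G whose restriction γ ∩ E_H is a spanning tree of H, then for every spanning tree γ_H' of H the set (γ \ E_H) ∪ γ_H' is a spanning tree of G whose restriction to E_H is γ_H'. Consequently, the set Γ* = {γ ∈ Γ_G : γ ∩ E_H ∈ Γ_H} satisfies Γ* = {γ_H ∪ S : γ_H ∈ Γ_H, S ∈ ψ₂(Γ*)}, where ψ₂(Γ*) = {γ \ E_H : γ ∈ Γ*}. -/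
noncomputable section
open scoped Classical
open Finset

variable {V : Type*} [Fintype V] [DecidableEq V]

lemma connected_of_forall_reachable {V : Type*} (G1 G2 : SimpleGraph V)
    (h1 : G1.Connected) (h : ∀ u v, G1.Adj u v → G2.Reachable u v) : G2.Connected := by
  rw [SimpleGraph.connected_iff] at h1 ⊢
  refine ⟨fun u v => ?_, h1.2⟩
  obtain ⟨w⟩ := h1.1 u v
  induction w with
  | nil => exact SimpleGraph.Reachable.refl _
  | cons hadj _ ih => exact (h _ _ hadj).trans ih

/-- replacing the `H`-restriction of a spanning tree of `G` by
any spanning tree of `H` again gives a spanning tree of `G`; consequently the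
family `Γ* = {γ ∈ Γ_G : γ ∩ E_H ∈ Γ_H}` splits as
`Γ* = {γ_H ∪ S : γ_H ∈ Γ_H, S ∈ ψ₂(Γ*)}`. -/
theorem core_divides_spanning_trees
    {V : Type*} [Fintype V] [DecidableEq V]
    (G : SimpleGraph V) (hG : G.Connected)
    (W : Finset V) (hconn : (G.induce (↑W : Set V)).Connected) :
    (∀ γ ∈ spanningTrees G, γ ∩ edgesWithin G W ∈ spanningTreesOn G W →
      ∀ γH' ∈ spanningTreesOn G W,
        (γ \ edgesWithin G W) ∪ γH' ∈ spanningTrees G ∧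
        ((γ \ edgesWithin G W) ∪ γH') ∩ edgesWithin G W = γH') ∧
    ((spanningTrees G).filter (fun γ => γ ∩ edgesWithin G W ∈ spanningTreesOn G W) =
      Finset.image₂ (· ∪ ·) (spanningTreesOn G W)
        (((spanningTrees G).filter
            (fun γ => γ ∩ edgesWithin G W ∈ spanningTreesOn G W)).image
          (fun γ => γ \ edgesWithin G W))) := by
  classical
  have key : ∀ γ ∈ spanningTrees G, γ ∩ edgesWithin G W ∈ spanningTreesOn G W →
      ∀ γH' ∈ spanningTreesOn G W,
        (γ \ edgesWithin G W) ∪ γH' ∈ spanningTrees G ∧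
        ((γ \ edgesWithin G W) ∪ γH') ∩ edgesWithin G W = γH' := by
    intro γ hγ hγH γH' hγH'
    simp only [spanningTrees, Finset.mem_filter, Finset.mem_univ, true_and] at hγ
    obtain ⟨hsub, hconn', hcard⟩ := hγ
    simp only [spanningTreesOn, Finset.mem_filter, Finset.mem_univ, true_and,
      IsSpanningTreeOn] at hγH hγH'
    obtain ⟨hsubH, hconnH, hcardH⟩ := hγH
    obtain ⟨hsubH', hconnH', hcardH'⟩ := hγH'
    have hdisj : Disjoint (γ \ edgesWithin G W) γH' := by
      rw [Finset.disjoint_left]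
      intro e he he'
      exact (Finset.mem_sdiff.mp he).2 (hsubH' he')
    have hint : ((γ \ edgesWithin G W) ∪ γH') ∩ edgesWithin G W = γH' := by
      rw [Finset.union_inter_distrib_right, Finset.sdiff_inter_self,
        Finset.inter_eq_left.mpr hsubH', Finset.empty_union]
    refine ⟨?_, hint⟩
    simp only [spanningTrees, Finset.mem_filter, Finset.mem_univ, true_and]
    refine ⟨?_, ?_, ?_⟩
    · intro e he
      rw [Finset.mem_coe, Finset.mem_union, Finset.mem_sdiff] at he
      rcases he with he | he
      · exact hsub he.1
      · have := hsubH' he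
        simp only [edgesWithin, Finset.mem_filter, SimpleGraph.mem_edgeFinset] at this
        exact this.1
    · apply connected_of_forall_reachable _ _ hconn'
      intro u v hadj
      rw [SimpleGraph.fromEdgeSet_adj, Finset.mem_coe] at hadj
      obtain ⟨hmem, hne⟩ := hadj
      by_cases hEH : s(u, v) ∈ edgesWithin G W
      · have hW := (Finset.mem_filter.mp hEH).2
        have hu : u ∈ W := hW u (Sym2.mem_mk_left u v)
        have hv : v ∈ W := hW v (Sym2.mem_mk_right u v)
        have hreach := hconnH'.preconnected ⟨u, Finset.mem_coe.mpr hu⟩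
          ⟨v, Finset.mem_coe.mpr hv⟩
        have hr2 : (SimpleGraph.fromEdgeSet (↑γH' : Set (Sym2 V))).Reachable u v :=
          hreach.map (SimpleGraph.Embedding.induce (↑W : Set V)).toHom
        refine hr2.mono (SimpleGraph.fromEdgeSet_mono ?_)
        intro e he
        rw [Finset.mem_coe] at he ⊢
        exact Finset.mem_union_right _ he
      · refine SimpleGraph.Adj.reachable ?_
        rw [SimpleGraph.fromEdgeSet_adj, Finset.mem_coe]
        exact ⟨Finset.mem_union_left _ (Finset.mem_sdiff.mpr ⟨hmem, hEH⟩), hne⟩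
    · rw [Finset.card_union_of_disjoint hdisj, hcardH']
      have h2 : (γ ∩ edgesWithin G W).card + (γ \ edgesWithin G W).card = γ.card :=
        Finset.card_inter_add_card_sdiff γ (edgesWithin G W)
      omega
  refine ⟨key, ?_⟩
  ext γ
  simp only [Finset.mem_filter, Finset.mem_image₂, Finset.mem_image]
  constructor
  · rintro ⟨hγ, hγH⟩
    exact ⟨γ ∩ edgesWithin G W, hγH, γ \ edgesWithin G W,
      ⟨γ, ⟨hγ, hγH⟩, rfl⟩, sup_inf_sdiff γ _⟩
  · rintro ⟨γH', hγH', S, ⟨γ0, hγ0, rfl⟩, rfl⟩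
    obtain ⟨h1, h2⟩ := key γ0 hγ0.1 hγ0.2 γH' hγH'
    rw [Finset.union_comm]
    exact ⟨h1, by rw [h2]; exact hγH'⟩
end
end
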